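/- Let I ⊆ ℝ be a nonempty interval, n ≥ 2, and let f₁,…,fₙ, g₁,…,gₙ : I → ℝ be continuous strictly increasing functions. For x < y in I, let φ_{(x,y)}(t₁,…,tₙ) := (M_{f₁,g₁}(x,t₂), M_{f₂,g₂}(t₁,t₃), …, M_{fₙ,gₙ}(t_{n−1},y)) on [x,y]ⁿ_≤, with Matkowski means M_{fᵢ,gᵢ}. Then for every x < y in I the fixed point set Φ_{(x,y)} is nonempty and compact. Furthermore, Φ_{(x,y)} is a singleton provided that aᵢ := lip[fᵢ ∘ (f_{i−1}+g_{i−1})⁻¹] < +∞ for i ∈ {2,…,n}, bᵢ := lip[gᵢ ∘ (f_{i+1}+g_{i+1})⁻¹] < +∞ for i ∈ {1,…,n−1}, and w₁,…,w_{n−1} > 0, where w₋₁ := w₀ := 1 and wᵢ := w_{i−1} − a_{i+1} bᵢ w_{i−2} for i ∈ {1,…,n−1}. -/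

import Mathlib

/-- `M` is a two-variable mean on `I` (its values on pairs `x > y` are irrelevant). -/
def IsMeanOn (I : Set ℝ) (M : ℝ → ℝ → ℝ) : Prop :=
  ∀ x ∈ I, ∀ y ∈ I, x ≤ y → x ≤ M x y ∧ M x y ≤ y

/-- `M` is a strict two-variable mean on `I`. -/
def IsStrictMeanOn (I : Set ℝ) (M : ℝ → ℝ → ℝ) : Prop :=
  IsMeanOn I M ∧ ∀ x ∈ I, ∀ y ∈ I, x < y → x < M x y ∧ M x y < y

/-- The map `φ_{(x,y)}(t₁,…,tₙ) = (M₁(x,t₂), M₂(t₁,t₃), …, Mₙ(t_{n-1},y))`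
(0-indexed: `M i` is the paper's `M_{i+1}`). -/
def phiMap (n : ℕ) (M : Fin n → ℝ → ℝ → ℝ) (x y : ℝ) (t : Fin n → ℝ) : Fin n → ℝ :=
  fun i =>
    M i (if _h : (i : ℕ) = 0 then x else t ⟨(i : ℕ) - 1, by have := i.isLt; omega⟩)
        (if _h : (i : ℕ) = n - 1 then y else t ⟨(i : ℕ) + 1, by have := i.isLt; omega⟩)

/-- The fixed point set `Φ_{(x,y)} = {ξ ∈ [x,y]ⁿ_≤ : φ_{(x,y)}(ξ) = ξ}`. -/
def phiFixedSet (n : ℕ) (M : Fin n → ℝ → ℝ → ℝ) (x y : ℝ) : Set (Fin n → ℝ) :=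
  {t | (∀ i, t i ∈ Set.Icc x y) ∧ Monotone t ∧ phiMap n M x y t = t}

namespace Stmt7Aux
open Filter Topology Set

def ext (n : ℕ) (x y : ℝ) (t : Fin n → ℝ) : ℕ → ℝ :=
  fun i => if h : 1 ≤ i ∧ i ≤ n then t ⟨i - 1, by omega⟩ else if i = 0 then x else y

lemma ext_zero (n : ℕ) (x y : ℝ) (t : Fin n → ℝ) : ext n x y t 0 = x := by simp [ext]

lemma ext_mid (n : ℕ) (x y : ℝ) (t : Fin n → ℝ) (i : ℕ) (h : i < n) :
    ext n x y t (i + 1) = t ⟨i, h⟩ := by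
  rw [ext, dif_pos ⟨by omega, by omega⟩]
  congr 1

lemma ext_top (n : ℕ) (x y : ℝ) (t : Fin n → ℝ) (i : ℕ) (h : n < i) :
    ext n x y t i = y := by
  rw [ext, dif_neg (by omega), if_neg (by omega)]

lemma ext_mem (n : ℕ) (x y : ℝ) (t : Fin n → ℝ) (hxy : x ≤ y)
    (hb : ∀ i, t i ∈ Icc x y) (j : ℕ) : ext n x y t j ∈ Icc x y := by
  rw [ext]; split_ifs with h1 h2
  · exact hb _
  · exact ⟨le_rfl, hxy⟩
  · exact ⟨hxy, le_rfl⟩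

lemma ext_mono (n : ℕ) (x y : ℝ) (t : Fin n → ℝ) (hxy : x ≤ y)
    (hb : ∀ i, t i ∈ Icc x y) (hm : Monotone t) :
    Monotone (ext n x y t) := by
  intro j k hjk
  rw [ext, ext]
  split_ifs with h1 h2 h3 h4 h5 h6 h7 h8
  all_goals first
    | omega
    | exact hm (by rw [Fin.mk_le_mk]; omega)
    | exact (hb _).2
    | exact (hb _).1
    | exact hxy
    | exact le_rfl

lemma ext_le_ext (n : ℕ) (x y : ℝ) (s t : Fin n → ℝ) (hst : ∀ i, s i ≤ t i) (j : ℕ) :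
    ext n x y s j ≤ ext n x y t j := by
  rw [ext, ext]; split_ifs with h1 h2
  · exact hst _
  · exact le_rfl
  · exact le_rfl

lemma mono_of_succ {n : ℕ} (t : Fin n → ℝ)
    (h : ∀ k : ℕ, ∀ hk : k + 1 < n, t ⟨k, by omega⟩ ≤ t ⟨k + 1, hk⟩) : Monotone t := by
  intro i j hij
  rcases i with ⟨i, hi⟩; rcases j with ⟨j, hj⟩
  rw [Fin.mk_le_mk] at hij
  induction j with
  | zero => have : i = 0 := by omega
            subst this; exact le_rfl
  | succ j ih =>
    rcases Nat.lt_or_ge i (j + 1) with hlt | hge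
    · exact le_trans (ih (by omega) (by omega)) (h j hj)
    · have : i = j + 1 := by omega
      subst this; exact le_rfl


section

variable {I : Set ℝ} {n : ℕ} {f g : Fin n → ℝ → ℝ} {M : Fin n → ℝ → ℝ → ℝ} {x y : ℝ}

lemma Finj (hfm : ∀ i, StrictMonoOn (f i) I) (hgm : ∀ i, StrictMonoOn (g i) I)
    (j : Fin n) {u v : ℝ} (hu : u ∈ I) (hv : v ∈ I)
    (h : f j u + g j u = f j v + g j v) : u = v := by
  by_contra hne
  rcases lt_or_gt_of_ne hne with h' | h'
  · have h1 := hfm j hu hv h'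
    have h2 := hgm j hu hv h'
    linarith
  · have h1 := hfm j hv hu h'
    have h2 := hgm j hv hu h'
    linarith

lemma mean_mem (hfm : ∀ i, StrictMonoOn (f i) I) (hgm : ∀ i, StrictMonoOn (g i) I)
    (hM : ∀ i, ∀ x ∈ I, ∀ y ∈ I, x ≤ y →
      M i x y ∈ I ∧ f i (M i x y) + g i (M i x y) = f i x + g i y)
    (i : Fin n) {u v : ℝ} (hu : u ∈ I) (hv : v ∈ I) (huv : u ≤ v) :
    u ≤ M i u v ∧ M i u v ≤ v := by
  obtain ⟨hmI, heq⟩ := hM i u hu v hv huv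
  constructor
  · by_contra h
    push_neg at h
    have h1 := hfm i hmI hu h
    have h2 := hgm i hmI hu h
    have h3 := (hgm i).monotoneOn hu hv huv
    linarith
  · by_contra h
    push_neg at h
    have h1 := hfm i hv hmI h
    have h2 := hgm i hv hmI h
    have h3 := (hfm i).monotoneOn hu hv huv
    linarith

lemma mean_mono (hfm : ∀ i, StrictMonoOn (f i) I) (hgm : ∀ i, StrictMonoOn (g i) I)
    (hM : ∀ i, ∀ x ∈ I, ∀ y ∈ I, x ≤ y →
      M i x y ∈ I ∧ f i (M i x y) + g i (M i x y) = f i x + g i y)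
    (i : Fin n) {u v u' v' : ℝ} (hu : u ∈ I) (hv : v ∈ I) (hu' : u' ∈ I) (hv' : v' ∈ I)
    (huv : u ≤ v) (huv' : u' ≤ v') (h1 : u ≤ u') (h2 : v ≤ v') :
    M i u v ≤ M i u' v' := by
  obtain ⟨hmI, heq⟩ := hM i u hu v hv huv
  obtain ⟨hmI', heq'⟩ := hM i u' hu' v' hv' huv'
  by_contra h
  push_neg at h
  have h3 := hfm i hmI' hmI h
  have h4 := hgm i hmI' hmI h
  have h5 := (hfm i).monotoneOn hu hu' h1
  have h6 := (hgm i).monotoneOn hv hv' h2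
  linarith

lemma phiMap_eq (t : Fin n → ℝ) (i : Fin n) :
    phiMap n M x y t i = M i (ext n x y t (i : ℕ)) (ext n x y t ((i : ℕ) + 2)) := by
  rcases i with ⟨i, hi⟩
  show M _ _ _ = M _ _ _
  congr 1
  · split_ifs with h0
    · subst h0; rw [ext_zero]
    · rw [ext, dif_pos ⟨by omega, by omega⟩]
  · split_ifs with h1
    · rw [ext_top]; omega
    · rw [ext, dif_pos ⟨by omega, by omega⟩]
      congr 1

lemma fixed_iff (hfm : ∀ i, StrictMonoOn (f i) I) (hgm : ∀ i, StrictMonoOn (g i) I)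
    (hM : ∀ i, ∀ x ∈ I, ∀ y ∈ I, x ≤ y →
      M i x y ∈ I ∧ f i (M i x y) + g i (M i x y) = f i x + g i y)
    (hxy : x ≤ y) (hsub : Icc x y ⊆ I)
    (t : Fin n → ℝ) (hb : ∀ i, t i ∈ Icc x y) (hm : Monotone t) :
    phiMap n M x y t = t ↔ ∀ i : Fin n,
      f i (t i) + g i (t i) = f i (ext n x y t (i : ℕ)) + g i (ext n x y t ((i : ℕ) + 2)) := by
  have hextmem : ∀ j, ext n x y t j ∈ Icc x y := ext_mem n x y t hxy hb
  have hextmono := ext_mono n x y t hxy hb hm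
  constructor
  · intro h i
    have h1 := congrFun h i
    rw [phiMap_eq] at h1
    rw [← h1]
    exact (hM i _ (hsub (hextmem _)) _ (hsub (hextmem _)) (hextmono (by omega))).2
  · intro h
    funext i
    rw [phiMap_eq]
    obtain ⟨hmI, heq⟩ := hM i _ (hsub (hextmem (i : ℕ))) _ (hsub (hextmem ((i : ℕ) + 2)))
      (hextmono (by omega))
    exact Finj hfm hgm i hmI (hsub (hb i)) (by rw [heq, ← h i])

lemma comp_tendsto (hsub : Icc x y ⊆ I) {F : ℝ → ℝ} (hF : ContinuousOn F I)
    {s : ℕ → ℝ} {z : ℝ} (hs : ∀ k, s k ∈ Icc x y) (hz : z ∈ Icc x y)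
    (h : Tendsto s atTop (𝓝 z)) : Tendsto (fun k => F (s k)) atTop (𝓝 (F z)) :=
  Filter.Tendsto.comp (hF z (hsub hz))
    (tendsto_nhdsWithin_of_tendsto_nhds_of_eventually_within _ h
      (Filter.Eventually.of_forall fun k => hsub (hs k)))

lemma ext_tendsto {u : ℕ → Fin n → ℝ} {t : Fin n → ℝ}
    (hu : Tendsto u atTop (𝓝 t)) (j : ℕ) :
    Tendsto (fun k => ext n x y (u k) j) atTop (𝓝 (ext n x y t j)) := by
  by_cases h : 1 ≤ j ∧ j ≤ n
  · simp only [ext, dif_pos h]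
    exact tendsto_pi_nhds.1 hu _
  · by_cases h0 : j = 0
    · simp only [ext, dif_neg h, if_pos h0]
      exact tendsto_const_nhds
    · simp only [ext, dif_neg h, if_neg h0]
      exact tendsto_const_nhds

lemma limit_fixed (hfm : ∀ i, StrictMonoOn (f i) I) (hgm : ∀ i, StrictMonoOn (g i) I)
    (hfc : ∀ i, ContinuousOn (f i) I) (hgc : ∀ i, ContinuousOn (g i) I)
    (hM : ∀ i, ∀ x ∈ I, ∀ y ∈ I, x ≤ y →
      M i x y ∈ I ∧ f i (M i x y) + g i (M i x y) = f i x + g i y)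
    (hxy : x ≤ y) (hsub : Icc x y ⊆ I)
    (u v : ℕ → Fin n → ℝ) (t : Fin n → ℝ)
    (hbu : ∀ k i, u k i ∈ Icc x y) (hbv : ∀ k i, v k i ∈ Icc x y)
    (hmu : ∀ k, Monotone (u k))
    (heq : ∀ k (i : Fin n), f i (v k i) + g i (v k i) =
      f i (ext n x y (u k) (i : ℕ)) + g i (ext n x y (u k) ((i : ℕ) + 2)))
    (hu : Tendsto u atTop (𝓝 t)) (hv : Tendsto v atTop (𝓝 t)) :
    t ∈ phiFixedSet n M x y := by
  have hcu : ∀ i, Tendsto (fun k => u k i) atTop (𝓝 (t i)) := tendsto_pi_nhds.1 hu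
  have hcv : ∀ i, Tendsto (fun k => v k i) atTop (𝓝 (t i)) := tendsto_pi_nhds.1 hv
  have hbt : ∀ i, t i ∈ Icc x y := fun i =>
    isClosed_Icc.mem_of_tendsto (hcu i) (Filter.Eventually.of_forall fun k => hbu k i)
  have hmt : Monotone t := fun i j hij =>
    le_of_tendsto_of_tendsto' (hcu i) (hcu j) fun k => hmu k hij
  refine ⟨hbt, hmt, ?_⟩
  rw [fixed_iff hfm hgm hM hxy hsub t hbt hmt]
  intro i
  have hbext : ∀ j, ext n x y t j ∈ Icc x y := ext_mem n x y t hxy hbt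
  have hL : Tendsto (fun k => f i (v k i) + g i (v k i)) atTop (𝓝 (f i (t i) + g i (t i))) :=
    (comp_tendsto hsub (hfc i) (fun k => hbv k i) (hbt i) (hcv i)).add
      (comp_tendsto hsub (hgc i) (fun k => hbv k i) (hbt i) (hcv i))
  have hR : Tendsto
      (fun k => f i (ext n x y (u k) (i : ℕ)) + g i (ext n x y (u k) ((i : ℕ) + 2))) atTop
      (𝓝 (f i (ext n x y t (i : ℕ)) + g i (ext n x y t ((i : ℕ) + 2)))) :=
    (comp_tendsto hsub (hfc i) (fun k => ext_mem n x y (u k) hxy (hbu k) _) (hbext _)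
        (ext_tendsto hu _)).add
      (comp_tendsto hsub (hgc i) (fun k => ext_mem n x y (u k) hxy (hbu k) _) (hbext _)
        (ext_tendsto hu _))
  exact tendsto_nhds_unique (by simpa only [heq] using hL) hR

lemma fixed_nonempty_compact (hfm : ∀ i, StrictMonoOn (f i) I) (hgm : ∀ i, StrictMonoOn (g i) I)
    (hfc : ∀ i, ContinuousOn (f i) I) (hgc : ∀ i, ContinuousOn (g i) I)
    (hM : ∀ i, ∀ x ∈ I, ∀ y ∈ I, x ≤ y →
      M i x y ∈ I ∧ f i (M i x y) + g i (M i x y) = f i x + g i y)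
    (hxy : x ≤ y) (hsub : Icc x y ⊆ I) :
    (phiFixedSet n M x y).Nonempty ∧ IsCompact (phiFixedSet n M x y) := by
  -- bounds of phiMap
  have phi_bdd : ∀ t : Fin n → ℝ, (∀ i, t i ∈ Icc x y) → Monotone t →
      ∀ i : Fin n, ext n x y t (i : ℕ) ≤ phiMap n M x y t i ∧
        phiMap n M x y t i ≤ ext n x y t ((i : ℕ) + 2) := by
    intro t hb hm i
    rw [phiMap_eq]
    exact mean_mem hfm hgm hM i (hsub (ext_mem n x y t hxy hb _))
      (hsub (ext_mem n x y t hxy hb _)) (ext_mono n x y t hxy hb hm (by omega))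
  have phi_mem : ∀ t : Fin n → ℝ, (∀ i, t i ∈ Icc x y) → Monotone t →
      ∀ i, phiMap n M x y t i ∈ Icc x y := by
    intro t hb hm i
    exact ⟨le_trans (ext_mem n x y t hxy hb _).1 (phi_bdd t hb hm i).1,
      le_trans (phi_bdd t hb hm i).2 (ext_mem n x y t hxy hb _).2⟩
  have phi_cmp : ∀ s t : Fin n → ℝ, (∀ i, s i ∈ Icc x y) → Monotone s →
      (∀ i, t i ∈ Icc x y) → Monotone t → (∀ i, s i ≤ t i) →
      ∀ i, phiMap n M x y s i ≤ phiMap n M x y t i := by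
    intro s t hbs hms hbt hmt hst i
    rw [phiMap_eq, phiMap_eq]
    exact mean_mono hfm hgm hM i (hsub (ext_mem n x y s hxy hbs _))
      (hsub (ext_mem n x y s hxy hbs _)) (hsub (ext_mem n x y t hxy hbt _))
      (hsub (ext_mem n x y t hxy hbt _)) (ext_mono n x y s hxy hbs hms (by omega))
      (ext_mono n x y t hxy hbt hmt (by omega)) (ext_le_ext n x y s t hst _)
      (ext_le_ext n x y s t hst _)
  constructor
  · -- nonemptiness via iteration
    set seq : ℕ → Fin n → ℝ := fun k => (phiMap n M x y)^[k] (fun _ => x) with hseq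
    have hsucc : ∀ k, seq (k + 1) = phiMap n M x y (seq k) := by
      intro k; simp only [hseq, Function.iterate_succ_apply']
    have inv : ∀ k, (∀ i, seq k i ∈ Icc x y) ∧ Monotone (seq k) ∧ ∀ i, seq k i ≤ seq (k + 1) i := by
      intro k
      induction k with
      | zero =>
        refine ⟨fun i => ⟨le_rfl, hxy⟩, monotone_const, fun i => ?_⟩
        rw [hsucc 0]
        exact le_trans (ext_mem n x y (seq 0) hxy (fun i => ⟨le_rfl, hxy⟩) _).1
          (phi_bdd (seq 0) (fun i => ⟨le_rfl, hxy⟩) monotone_const i).1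
      | succ k ih =>
        obtain ⟨hb, hm, hle⟩ := ih
        have hb' : ∀ i, seq (k + 1) i ∈ Icc x y := by
          rw [hsucc]; exact phi_mem (seq k) hb hm
        have hm' : Monotone (seq (k + 1)) := by
          apply mono_of_succ
          intro j hj
          have h1 : seq (k + 1) ⟨j, by omega⟩ ≤ ext n x y (seq k) (j + 2) := by
            rw [hsucc]; exact (phi_bdd (seq k) hb hm ⟨j, by omega⟩).2
          have h2 : ext n x y (seq k) (j + 2) = seq k ⟨j + 1, hj⟩ := ext_mid n x y _ (j + 1) hj
          exact le_trans h1 (h2 ▸ hle ⟨j + 1, hj⟩)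
        refine ⟨hb', hm', fun i => ?_⟩
        have hc := phi_cmp (seq k) (seq (k + 1)) hb hm hb' hm' hle i
        rw [← hsucc (k + 1), ← hsucc k] at hc
        exact hc
    -- monotone convergence
    have hmono : ∀ i, Monotone fun k => seq k i := by
      intro i
      apply monotone_nat_of_le_succ
      intro k
      exact (inv k).2.2 i
    have hbd : ∀ i, BddAbove (Set.range fun k => seq k i) := by
      intro i
      exact ⟨y, by rintro z ⟨k, rfl⟩; exact ((inv k).1 i).2⟩
    set T : Fin n → ℝ := fun i => ⨆ k, seq k i with hT
    have hconv : Tendsto seq atTop (𝓝 T) := by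
      rw [tendsto_pi_nhds]
      intro i
      exact tendsto_atTop_ciSup (hmono i) (hbd i)
    refine ⟨T, limit_fixed hfm hgm hfc hgc hM hxy hsub seq (fun k => seq (k + 1)) T
      (fun k => (inv k).1) (fun k => (inv (k + 1)).1) (fun k => (inv k).2.1) ?_ hconv ?_⟩
    · intro k i
      have h1 : seq (k + 1) i = M i (ext n x y (seq k) (i : ℕ)) (ext n x y (seq k) ((i : ℕ) + 2)) := by
        rw [hsucc, phiMap_eq]
      rw [h1]
      exact (hM i _ (hsub (ext_mem n x y (seq k) hxy (inv k).1 _))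
        _ (hsub (ext_mem n x y (seq k) hxy (inv k).1 _))
        (ext_mono n x y (seq k) hxy (inv k).1 (inv k).2.1 (by omega))).2
    · exact hconv.comp (tendsto_add_atTop_nat 1)
  · -- compactness
    have hclosed : IsClosed (phiFixedSet n M x y) := by
      apply IsSeqClosed.isClosed
      intro u t hu hut
      have key : ∀ k (i : Fin n), f i (u k i) + g i (u k i) =
          f i (ext n x y (u k) (i : ℕ)) + g i (ext n x y (u k) ((i : ℕ) + 2)) := by
        intro k
        exact (fixed_iff hfm hgm hM hxy hsub (u k) (hu k).1 (hu k).2.1).1 (hu k).2.2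
      exact limit_fixed hfm hgm hfc hgc hM hxy hsub u u t (fun k => (hu k).1)
        (fun k => (hu k).1) (fun k => (hu k).2.1) key hut hut
    refine IsCompact.of_isClosed_subset
      (isCompact_univ_pi fun _ : Fin n => isCompact_Icc (a := x) (b := y)) hclosed ?_
    intro t ht
    exact fun i _ => ht.1 i

lemma uniq (hn : 2 ≤ n)
    (hfm : ∀ i, StrictMonoOn (f i) I) (hgm : ∀ i, StrictMonoOn (g i) I)
    (hM : ∀ i, ∀ x ∈ I, ∀ y ∈ I, x ≤ y →
      M i x y ∈ I ∧ f i (M i x y) + g i (M i x y) = f i x + g i y)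
    (hxy : x < y) (hx : x ∈ I) (hy : y ∈ I) (hsub : Icc x y ⊆ I)
    (a b w : ℕ → ℝ)
    (ha : ∀ i : ℕ, ∀ _h1 : 2 ≤ i, ∀ _h2 : i ≤ n, ∀ u ∈ I, ∀ v ∈ I,
        |f ⟨i - 1, by have := hn; omega⟩ u - f ⟨i - 1, by have := hn; omega⟩ v| ≤
          a i * |(f ⟨i - 2, by have := hn; omega⟩ u + g ⟨i - 2, by have := hn; omega⟩ u) -
                 (f ⟨i - 2, by have := hn; omega⟩ v + g ⟨i - 2, by have := hn; omega⟩ v)|)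
    (hbb : ∀ i : ℕ, ∀ _h1 : 1 ≤ i, ∀ _h2 : i ≤ n - 1, ∀ u ∈ I, ∀ v ∈ I,
        |g ⟨i - 1, by have := hn; omega⟩ u - g ⟨i - 1, by have := hn; omega⟩ v| ≤
          b i * |(f ⟨i, by have := hn; omega⟩ u + g ⟨i, by have := hn; omega⟩ u) -
                 (f ⟨i, by have := hn; omega⟩ v + g ⟨i, by have := hn; omega⟩ v)|)
    (hw0 : w 0 = 1) (hw1 : w 1 = 1)
    (hwrec : ∀ i : ℕ, 1 ≤ i → i ≤ n - 1 → w (i + 1) = w i - a (i + 1) * b i * w (i - 1))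
    (hwpos : ∀ i : ℕ, 1 ≤ i → i ≤ n - 1 → 0 < w (i + 1))
    (ξ η : Fin n → ℝ) (hξ : ξ ∈ phiFixedSet n M x y) (hη : η ∈ phiFixedSet n M x y) :
    ξ = η := by
  obtain ⟨hbξ, hmξ, hfixξ⟩ := hξ
  obtain ⟨hbη, hmη, hfixη⟩ := hη
  have heξ := (fixed_iff hfm hgm hM hxy.le hsub ξ hbξ hmξ).1 hfixξ
  have heη := (fixed_iff hfm hgm hM hxy.le hsub η hbη hmη).1 hfixη
  have hmemξ : ∀ j, ext n x y ξ j ∈ I := fun j => hsub (ext_mem n x y ξ hxy.le hbξ j)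
  have hmemη : ∀ j, ext n x y η j ∈ I := fun j => hsub (ext_mem n x y η hxy.le hbη j)
  set FF : ℕ → ℝ → ℝ := fun j z => if h : j < n then f ⟨j, h⟩ z + g ⟨j, h⟩ z else z with hFF
  set c : ℕ → ℝ := fun i => |FF (i - 1) (ext n x y ξ i) - FF (i - 1) (ext n x y η i)| with hc
  have hcnn : ∀ i, 0 ≤ c i := fun i => abs_nonneg _
  have cSpec : ∀ (i j : ℕ) (hj : j < n), i = j + 1 →
      c i = |(f ⟨j, hj⟩ (ext n x y ξ i) + g ⟨j, hj⟩ (ext n x y ξ i)) -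
            (f ⟨j, hj⟩ (ext n x y η i) + g ⟨j, hj⟩ (ext n x y η i))| := by
    rintro i j hj rfl
    simp only [hc, hFF, Nat.add_sub_cancel, dif_pos hj]
  have eqSpec : ∀ (t : Fin n → ℝ),
      (∀ i : Fin n, f i (t i) + g i (t i) =
        f i (ext n x y t (i : ℕ)) + g i (ext n x y t ((i : ℕ) + 2))) →
      ∀ (i j : ℕ) (hj : j < n), i = j + 1 →
      f ⟨j, hj⟩ (ext n x y t i) + g ⟨j, hj⟩ (ext n x y t i) =
      f ⟨j, hj⟩ (ext n x y t (i - 1)) + g ⟨j, hj⟩ (ext n x y t (i + 1)) := by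
    intro t he i j hj hi
    subst hi
    rw [ext_mid n x y t j hj]
    exact he ⟨j, hj⟩
  have tri : ∀ p q r s : ℝ, |(p + q) - (r + s)| ≤ |p - r| + |q - s| := by
    intro p q r s
    have h1 : (p + q) - (r + s) = (p - r) + (q - s) := by ring
    rw [h1]
    exact abs_add_le _ _
  have habs : ∀ i : ℕ, 1 ≤ i → i ≤ n →
      c i ≤ (if 2 ≤ i then a i * c (i - 1) else 0) +
            (if i ≤ n - 1 then b i * c (i + 1) else 0) := by
    intro i h1 h2
    have hj : i - 1 < n := by omega
    have hi1 : i = (i - 1) + 1 := by omega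
    rw [cSpec i (i - 1) hj hi1, eqSpec ξ heξ i (i - 1) hj hi1, eqSpec η heη i (i - 1) hj hi1]
    refine le_trans (tri _ _ _ _) (add_le_add ?_ ?_)
    · split_ifs with h2i
      · rw [cSpec (i - 1) (i - 2) (by omega) (by omega)]
        exact ha i h2i h2 _ (hmemξ _) _ (hmemη _)
      · have hz : ext n x y ξ (i - 1) = ext n x y η (i - 1) := by
          have h0 : i - 1 = 0 := by omega
          rw [h0, ext_zero, ext_zero]
        rw [hz, sub_self, abs_zero]
    · split_ifs with hin
      · rw [cSpec (i + 1) i (by omega) rfl]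
        exact hbb i h1 hin _ (hmemξ _) _ (hmemη _)
      · have hz : ext n x y ξ (i + 1) = ext n x y η (i + 1) := by
          rw [ext_top n x y ξ (i + 1) (by omega), ext_top n x y η (i + 1) (by omega)]
        rw [hz, sub_self, abs_zero]
  have hapos : ∀ i : ℕ, 2 ≤ i → i ≤ n → 0 ≤ a i := by
    intro i h1 h2
    by_contra hneg
    push_neg at hneg
    have h3 := ha i h1 h2 x hx y hy
    have h4 : f ⟨i - 1, by omega⟩ x < f ⟨i - 1, by omega⟩ y := hfm _ hx hy hxy
    have h6 : 0 < |f ⟨i - 1, by omega⟩ x - f ⟨i - 1, by omega⟩ y| :=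
      abs_pos.2 (sub_ne_zero.2 (ne_of_lt h4))
    nlinarith [abs_nonneg ((f ⟨i - 2, by omega⟩ x + g ⟨i - 2, by omega⟩ x) -
      (f ⟨i - 2, by omega⟩ y + g ⟨i - 2, by omega⟩ y))]
  have hwp : ∀ j, j ≤ n → 0 < w j := by
    intro j hj
    rcases j with _ | _ | k
    · rw [hw0]; norm_num
    · rw [hw1]; norm_num
    · exact hwpos (k + 1) (by omega) (by omega)
  have hP : ∀ i : ℕ, 1 ≤ i → i ≤ n - 1 → w i * c i ≤ w (i - 1) * (b i * c (i + 1)) := by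
    intro i h1
    induction i, h1 using Nat.le_induction with
    | base =>
      intro h2
      have h3 := habs 1 le_rfl (by omega)
      rw [if_neg (by omega), if_pos (by omega)] at h3
      show w 1 * c 1 ≤ w 0 * (b 1 * c 2)
      rw [hw0, hw1]
      have h4 : c 1 ≤ 0 + b 1 * c 2 := h3
      linarith
    | succ i h1' ih =>
      intro h2
      have ihh := ih (by omega)
      have h3 := habs (i + 1) (by omega) (by omega)
      rw [if_pos (by omega), if_pos h2] at h3
      have h3' : c (i + 1) ≤ a (i + 1) * c i + b (i + 1) * c (i + 2) := h3
      have hrec := hwrec i (by omega) (by omega)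
      have hwi : 0 < w i := hwp i (by omega)
      have hai : 0 ≤ a (i + 1) := hapos (i + 1) (by omega) (by omega)
      show w (i + 1) * c (i + 1) ≤ w i * (b (i + 1) * c (i + 2))
      rw [hrec]
      nlinarith [mul_le_mul_of_nonneg_left h3' hwi.le, mul_le_mul_of_nonneg_left ihh hai]
  have hcn : c n = 0 := by
    have h3 := habs n (by omega) le_rfl
    rw [if_pos hn, if_neg (by omega)] at h3
    have hPn := hP (n - 1) (by omega) le_rfl
    have h4 : n - 1 + 1 = n := by omega
    rw [h4] at hPn
    have hrec := hwrec (n - 1) (by omega) le_rfl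
    rw [h4] at hrec
    have hwn : 0 < w n := hwp n le_rfl
    have hai := hapos n hn le_rfl
    have h8 : (w (n - 1) - a n * b (n - 1) * w (n - 1 - 1)) * c n ≤ 0 := by
      nlinarith [mul_le_mul_of_nonneg_left h3 (hwp (n - 1) (by omega)).le,
        mul_le_mul_of_nonneg_left hPn hai]
    have h8' : w n * c n ≤ 0 := by rw [hrec]; exact h8
    have h9 : c n ≤ 0 := by
      by_contra h
      push_neg at h
      nlinarith [mul_pos hwn h]
    exact le_antisymm h9 (hcnn n)
  have hczero : ∀ d : ℕ, d ≤ n - 1 → c (n - d) = 0 := by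
    intro d
    induction d with
    | zero => intro _; exact hcn
    | succ d ih =>
      intro hd
      have hprev := ih (by omega)
      have hPi := hP (n - (d + 1)) (by omega) (by omega)
      have hidx : n - (d + 1) + 1 = n - d := by omega
      rw [hidx, hprev] at hPi
      have hw' : 0 < w (n - (d + 1)) := hwp _ (by omega)
      have hle : c (n - (d + 1)) ≤ 0 := by
        by_contra h
        push_neg at h
        nlinarith [mul_pos hw' h, hPi]
      exact le_antisymm hle (hcnn _)
  have hcall : ∀ i, 1 ≤ i → i ≤ n → c i = 0 := by
    intro i h1 h2
    have h3 := hczero (n - i) (by omega)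
    rwa [show n - (n - i) = i from by omega] at h3
  funext j
  have hc0 := hcall ((j : ℕ) + 1) (by omega) (by omega)
  rw [cSpec ((j : ℕ) + 1) (j : ℕ) j.isLt rfl,
    ext_mid n x y ξ (j : ℕ) j.isLt, ext_mid n x y η (j : ℕ) j.isLt] at hc0
  have heq0 : f ⟨(j : ℕ), j.isLt⟩ (ξ ⟨(j : ℕ), j.isLt⟩) + g ⟨(j : ℕ), j.isLt⟩ (ξ ⟨(j : ℕ), j.isLt⟩)
      = f ⟨(j : ℕ), j.isLt⟩ (η ⟨(j : ℕ), j.isLt⟩) + g ⟨(j : ℕ), j.isLt⟩ (η ⟨(j : ℕ), j.isLt⟩) := by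
    have h5 := abs_eq_zero.1 hc0
    linarith
  exact Finj hfm hgm _ (hsub (hbξ _)) (hsub (hbη _)) heq0

end
end Stmt7Aux

/-- For Matkowski means `M i = M_{f_{i+1}, g_{i+1}}` (characterized by
`M i x y ∈ I` and `f i (M i x y) + g i (M i x y) = f i x + g i y`), the fixed point set
`Φ_{(x,y)}` is nonempty and compact for all `x < y` in `I`; moreover it is a singleton
provided the Lipschitz moduli `a i = lip[fᵢ ∘ (f_{i-1}+g_{i-1})⁻¹]` and
`b i = lip[gᵢ ∘ (f_{i+1}+g_{i+1})⁻¹]` are finite (i.e. admit the bounds below) and the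
associated sequence `w` (with `w (k+1)` the paper's `w_k`) is positive. -/
theorem stmt7 (I : Set ℝ) (hI : Set.OrdConnected I) (hne : I.Nonempty)
    (n : ℕ) (hn : 2 ≤ n)
    (f g : Fin n → ℝ → ℝ)
    (hfm : ∀ i, StrictMonoOn (f i) I) (hgm : ∀ i, StrictMonoOn (g i) I)
    (hfc : ∀ i, ContinuousOn (f i) I) (hgc : ∀ i, ContinuousOn (g i) I)
    (M : Fin n → ℝ → ℝ → ℝ)
    (hM : ∀ i, ∀ x ∈ I, ∀ y ∈ I, x ≤ y →
      M i x y ∈ I ∧ f i (M i x y) + g i (M i x y) = f i x + g i y) :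
    (∀ x ∈ I, ∀ y ∈ I, x < y →
      (phiFixedSet n M x y).Nonempty ∧ IsCompact (phiFixedSet n M x y)) ∧
    (∀ a b w : ℕ → ℝ,
      (∀ i : ℕ, ∀ _h1 : 2 ≤ i, ∀ _h2 : i ≤ n, ∀ u ∈ I, ∀ v ∈ I,
        |f ⟨i - 1, by omega⟩ u - f ⟨i - 1, by omega⟩ v| ≤
          a i * |(f ⟨i - 2, by omega⟩ u + g ⟨i - 2, by omega⟩ u) -
                 (f ⟨i - 2, by omega⟩ v + g ⟨i - 2, by omega⟩ v)|) →
      (∀ i : ℕ, ∀ _h1 : 1 ≤ i, ∀ _h2 : i ≤ n - 1, ∀ u ∈ I, ∀ v ∈ I,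
        |g ⟨i - 1, by omega⟩ u - g ⟨i - 1, by omega⟩ v| ≤
          b i * |(f ⟨i, by omega⟩ u + g ⟨i, by omega⟩ u) -
                 (f ⟨i, by omega⟩ v + g ⟨i, by omega⟩ v)|) →
      w 0 = 1 → w 1 = 1 →
      (∀ i : ℕ, 1 ≤ i → i ≤ n - 1 → w (i + 1) = w i - a (i + 1) * b i * w (i - 1)) →
      (∀ i : ℕ, 1 ≤ i → i ≤ n - 1 → 0 < w (i + 1)) →
      ∀ x ∈ I, ∀ y ∈ I, x < y → ∃ ξ, phiFixedSet n M x y = {ξ}) := by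
  constructor
  · intro x hx y hy hxy
    exact Stmt7Aux.fixed_nonempty_compact hfm hgm hfc hgc hM hxy.le (hI.out hx hy)
  · intro a b w ha hbb hw0 hw1 hwrec hwpos x hx y hy hxy
    obtain ⟨⟨ξ, hξ⟩, -⟩ :=
      Stmt7Aux.fixed_nonempty_compact hfm hgm hfc hgc hM hxy.le (hI.out hx hy)
    refine ⟨ξ, Set.eq_singleton_iff_unique_mem.2 ⟨hξ, fun η hη => ?_⟩⟩
    exact Stmt7Aux.uniq hn hfm hgm hM hxy hx hy (hI.out hx hy) a b w ha hbb hw0 hw1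
      hwrec hwpos η ξ hη hξ
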